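/- Let w ∈ ℝⁿ satisfy w_1 > w_2 > … > w_n > 0 (strictly decreasing positive Fair OWA weights). Let y ∈ ℝⁿ, let i ≠ j be indices, and let ε > 0 satisfy y_i > y_j + ε. Define y_ε ∈ ℝⁿ by (y_ε)_i = y_i − ε, (y_ε)_j = y_j + ε, and (y_ε)_k = y_k for all k ∉ {i, j}. Then OWA_w(y_ε) > OWA_w(y). That is, Fair OWA is equitable: a marginal transfer from a coordinate with a higher value to a coordinate with a lower value strictly increases the aggregated value. -/
import Mathlib


/-- The vector `y` sorted in nondecreasing order. -/
noncomputable def sortVec {n : ℕ} (y : Fin n → ℝ) : Fin n → ℝ :=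
  y ∘ Tuple.sort y

/-- The ordered weighted average of `y` with weights `w`. -/
noncomputable def OWA {n : ℕ} (w y : Fin n → ℝ) : ℝ :=
  ∑ k, w k * sortVec y k

namespace OwaAuxEquit

open Finset

/-- Prefix sum of the sorted vector: sum of the `m` smallest entries. -/
noncomputable def pre {n : ℕ} (y : Fin n → ℝ) (m : ℕ) : ℝ :=
  ∑ k ∈ Finset.univ.filter (fun k : Fin n => (k : ℕ) < m), sortVec y k

lemma strictMono_nat_le {m : ℕ} (g : Fin m → ℕ) (hg : StrictMono g) (k : Fin m) :
    (k : ℕ) ≤ g k := by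
  have key : ∀ p : ℕ, ∀ k : Fin m, (k : ℕ) = p → p ≤ g k := by
    intro p
    induction p with
    | zero => intro k _; exact Nat.zero_le _
    | succ q ih =>
      intro k hk
      have hq : q < m := by omega
      have h1 : (⟨q, hq⟩ : Fin m) < k := by
        rw [Fin.lt_def]; simp; omega
      have h2 := hg h1
      have h3 := ih ⟨q, hq⟩ rfl
      omega
  exact key _ k rfl

lemma filter_lt_eq_map {n m : ℕ} (hm : m ≤ n) :
    Finset.univ.filter (fun k : Fin n => (k : ℕ) < m)
      = Finset.univ.map (Fin.castLEEmb hm) := by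
  ext k
  simp only [Finset.mem_filter, Finset.mem_univ, true_and, Finset.mem_map]
  constructor
  · intro hk
    exact ⟨⟨(k : ℕ), hk⟩, Fin.ext rfl⟩
  · rintro ⟨a, rfl⟩
    exact a.2

lemma card_filter_lt {n m : ℕ} (hm : m ≤ n) :
    (Finset.univ.filter (fun k : Fin n => (k : ℕ) < m)).card = m := by
  rw [filter_lt_eq_map hm, Finset.card_map, Finset.card_univ, Fintype.card_fin]

/-- For a monotone `f`, the sum over the first `m` indices is the least among
sums over sets of `m` indices. -/
lemma mono_prefix_le {n : ℕ} {f : Fin n → ℝ} (hf : Monotone f) {m : ℕ}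
    (B : Finset (Fin n)) (hB : B.card = m) :
    ∑ k ∈ Finset.univ.filter (fun k : Fin n => (k : ℕ) < m), f k ≤ ∑ k ∈ B, f k := by
  have hm : m ≤ n := by
    have := B.card_le_univ
    rw [hB] at this
    simpa using this
  set e := B.orderEmbOfFin hB with he
  have himg : Finset.image e Finset.univ = B := by
    ext a
    simp only [Finset.mem_image, Finset.mem_univ, true_and]
    constructor
    · rintro ⟨k, rfl⟩; exact B.orderEmbOfFin_mem hB k
    · intro ha
      have : a ∈ Set.range e := by
        rw [he, Finset.range_orderEmbOfFin B hB]; exact ha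
      obtain ⟨k, hk⟩ := this
      exact ⟨k, hk⟩
  have hBsum : ∑ k ∈ B, f k = ∑ k : Fin m, f (e k) := by
    rw [← himg, Finset.sum_image (fun a _ b _ h => e.injective h)]
  rw [hBsum, filter_lt_eq_map hm, Finset.sum_map]
  apply Finset.sum_le_sum
  intro k _
  apply hf
  rw [Fin.le_def]
  exact strictMono_nat_le (fun k => ((e k : Fin n) : ℕ))
    (fun a b hab => by exact_mod_cast (Fin.lt_def.1 (e.strictMono hab))) k

/-- `pre y` at `A.card` is a lower bound for the sum of `y` over `A`. -/
lemma pre_le_sum {n : ℕ} (y : Fin n → ℝ) (A : Finset (Fin n)) :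
    pre y A.card ≤ ∑ a ∈ A, y a := by
  classical
  set σ := Tuple.sort y with hσ
  set B := A.image σ.symm with hBdef
  have hBcard : B.card = A.card := Finset.card_image_of_injective _ σ.symm.injective
  have hsum : ∑ k ∈ B, sortVec y k = ∑ a ∈ A, y a := by
    rw [hBdef, Finset.sum_image (fun a _ b _ h => σ.symm.injective h)]
    refine Finset.sum_congr rfl fun a _ => ?_
    simp [sortVec, hσ]
  rw [← hsum]
  exact mono_prefix_le (Tuple.monotone_sort y) B hBcard

/-- `pre y m` is attained by a set of cardinality `m` (when `m ≤ n`). -/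
lemma pre_attain {n : ℕ} (y : Fin n → ℝ) {m : ℕ} (hm : m ≤ n) :
    ∃ D : Finset (Fin n), D.card = m ∧ ∑ a ∈ D, y a = pre y m := by
  classical
  set σ := Tuple.sort y with hσ
  refine ⟨(Finset.univ.filter (fun k : Fin n => (k : ℕ) < m)).image σ, ?_, ?_⟩
  · rw [Finset.card_image_of_injective _ σ.injective, card_filter_lt hm]
  · rw [Finset.sum_image (fun a _ b _ h => σ.injective h)]
    rfl

end OwaAuxEquit

open OwaAuxEquit in
/-- Equitability of Fair OWA: with strictly decreasing positive weights, a marginal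
transfer of `ε` from a higher-valued coordinate `i` to a lower-valued coordinate `j`
(with `y i > y j + ε`) strictly increases the OWA value. -/
theorem owa_equitable {n : ℕ} (w : Fin n → ℝ)
    (hw_anti : StrictAnti w) (hw_pos : ∀ k, 0 < w k)
    (y : Fin n → ℝ) (i j : Fin n) (hij : i ≠ j) (ε : ℝ) (hε : 0 < ε)
    (hgap : y i > y j + ε)
    (yε : Fin n → ℝ)
    (hyi : yε i = y i - ε) (hyj : yε j = y j + ε)
    (hyk : ∀ k, k ≠ i → k ≠ j → yε k = y k) :
    OWA w yε > OWA w y := by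
  classical
  -- extended weights and their differences
  set W : ℕ → ℝ := fun m => if h : m < n then w ⟨m, h⟩ else 0 with hW
  set d : ℕ → ℝ := fun m => W m - W (m + 1) with hd_def
  have hWk : ∀ k : Fin n, W k = w k := by
    intro k; simp [hW, k.2]
  have hWn : W n = 0 := by simp [hW]
  have hd : ∀ m, m < n → 0 < d m := by
    intro m hm
    have h1 : W m = w ⟨m, hm⟩ := by simp [hW, hm]
    by_cases h2 : m + 1 < n
    · have : W (m + 1) = w ⟨m + 1, h2⟩ := by simp [hW, h2]
      have hlt : w (⟨m + 1, h2⟩ : Fin n) < w ⟨m, hm⟩ :=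
        hw_anti (by rw [Fin.lt_def]; simp)
      simp only [hd_def, h1, this]
      linarith
    · have : W (m + 1) = 0 := by simp [hW, h2]
      simp only [hd_def, h1, this]
      linarith [hw_pos ⟨m, hm⟩]
  have htel : ∀ k : Fin n, ∑ m ∈ Finset.Ico (k : ℕ) n, d m = w k := by
    intro k
    rw [Finset.sum_Ico_eq_sub _ (le_of_lt k.2)]
    have h1 : ∀ p, ∑ m ∈ Finset.range p, d m = W 0 - W p := fun p =>
      Finset.sum_range_sub' W p
    rw [h1, h1, hWn, ← hWk k]
    ring
  -- Abel summation: OWA as positive combination of prefix sums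
  have hOWA : ∀ z : Fin n → ℝ, OWA w z = ∑ m ∈ Finset.range n, d m * pre z (m + 1) := by
    intro z
    unfold OWA
    calc ∑ k, w k * sortVec z k
        = ∑ k : Fin n, ∑ m ∈ Finset.Ico (k : ℕ) n, d m * sortVec z k := by
          refine Finset.sum_congr rfl fun k _ => ?_
          rw [← Finset.sum_mul, htel k]
      _ = ∑ k : Fin n, ∑ m ∈ Finset.range n,
            if (k : ℕ) ≤ m then d m * sortVec z k else 0 := by
          refine Finset.sum_congr rfl fun k _ => ?_
          rw [← Finset.sum_filter]
          congr 1
          ext m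
          simp only [Finset.mem_Ico, Finset.mem_filter, Finset.mem_range]
          tauto
      _ = ∑ m ∈ Finset.range n, ∑ k : Fin n,
            if (k : ℕ) ≤ m then d m * sortVec z k else 0 := Finset.sum_comm
      _ = ∑ m ∈ Finset.range n, d m * pre z (m + 1) := by
          refine Finset.sum_congr rfl fun m _ => ?_
          rw [← Finset.sum_filter]
          unfold pre
          rw [Finset.mul_sum]
          refine Finset.sum_congr ?_ (fun k _ => rfl)
          ext k
          simp [Nat.lt_succ_iff]
  -- effect of the transfer on sums over sets
  have hsumC : ∀ C : Finset (Fin n),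
      ∑ a ∈ C, yε a = ∑ a ∈ C, y a + (if j ∈ C then ε else 0)
        - (if i ∈ C then ε else 0) := by
    intro C
    have hpt : ∀ a, yε a = y a + ((if a = j then ε else 0) - (if a = i then ε else 0)) := by
      intro a
      by_cases haj : a = j
      · subst haj
        rw [hyj, if_pos rfl, if_neg (Ne.symm hij)]
        ring
      · by_cases hai : a = i
        · subst hai
          rw [hyi, if_neg haj, if_pos rfl]
          ring
        · rw [hyk a hai haj, if_neg haj, if_neg hai]
          ring
    rw [Finset.sum_congr rfl (fun a _ => hpt a), Finset.sum_add_distrib,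
      Finset.sum_sub_distrib, Finset.sum_ite_eq' C j (fun _ => ε),
      Finset.sum_ite_eq' C i (fun _ => ε)]
    ring
  -- the threshold set
  set A : Finset (Fin n) := Finset.univ.filter (fun a => y a ≤ y j) with hAdef
  have hjA : j ∈ A := by simp [hAdef]
  have hiA : i ∉ A := by simp [hAdef]; linarith
  have hA1 : 1 ≤ A.card := Finset.card_pos.2 ⟨j, hjA⟩
  have hAn : A.card ≤ n := by
    have := A.card_le_univ
    simpa using this
  -- key comparison lemma: A minimizes the sum among sets of its cardinality
  have lemma2 : ∀ C : Finset (Fin n), C.card = A.card →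
      (∑ a ∈ A, y a ≤ ∑ a ∈ C, y a) ∧ (C ≠ A → ∑ a ∈ A, y a < ∑ a ∈ C, y a) := by
    intro C hC
    have hcards : (C \ A).card = (A \ C).card := by
      have h1 := Finset.card_sdiff_add_card C A
      have h2 := Finset.card_sdiff_add_card A C
      rw [Finset.union_comm] at h2
      omega
    have hsplit1 : ∑ a ∈ C \ A, y a + ∑ a ∈ C ∩ A, y a = ∑ a ∈ C, y a := by
      have := Finset.sum_sdiff (f := y) (Finset.inter_subset_left : C ∩ A ⊆ C)
      rwa [Finset.sdiff_inter_self_left] at this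
    have hsplit2 : ∑ a ∈ A \ C, y a + ∑ a ∈ C ∩ A, y a = ∑ a ∈ A, y a := by
      have := Finset.sum_sdiff (f := y) (Finset.inter_subset_left : A ∩ C ⊆ A)
      rwa [Finset.sdiff_inter_self_left, Finset.inter_comm] at this
    have hup : ∑ a ∈ A \ C, y a ≤ ((A \ C).card : ℝ) * y j := by
      have := Finset.sum_le_card_nsmul (A \ C) y (y j) (fun a ha => by
        have := (Finset.mem_filter.1 (Finset.mem_sdiff.1 ha).1).2
        exact this)
      simpa [nsmul_eq_mul] using this
    have hlow : ((C \ A).card : ℝ) * y j ≤ ∑ a ∈ C \ A, y a := by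
      have := Finset.card_nsmul_le_sum (C \ A) y (y j) (fun a ha => by
        have h := (Finset.mem_sdiff.1 ha).2
        simp only [hAdef, Finset.mem_filter, Finset.mem_univ, true_and, not_le] at h
        linarith)
      simpa [nsmul_eq_mul] using this
    have hc' : ((C \ A).card : ℝ) = ((A \ C).card : ℝ) := by exact_mod_cast hcards
    rw [hc'] at hlow
    constructor
    · linarith
    · intro hne
      have hnonempty : (C \ A).Nonempty := by
        rw [Finset.sdiff_nonempty]
        intro hsub
        exact hne (Finset.eq_of_subset_of_card_le hsub (le_of_eq hC.symm))
      have hstrict : ((C \ A).card : ℝ) * y j < ∑ a ∈ C \ A, y a := by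
        have := Finset.sum_lt_sum_of_nonempty hnonempty (f := fun _ => y j) (g := y)
          (fun a ha => by
            have h := (Finset.mem_sdiff.1 ha).2
            simp only [hAdef, Finset.mem_filter, Finset.mem_univ, true_and, not_le] at h
            exact h)
        simpa [Finset.sum_const, nsmul_eq_mul] using this
      rw [hc'] at hstrict
      linarith
  -- weak monotonicity of prefix sums
  have hmono : ∀ m, m + 1 ≤ n → pre y (m + 1) ≤ pre yε (m + 1) := by
    intro m hm
    obtain ⟨D, hD, hDsum⟩ := pre_attain yε hm
    rw [← hDsum, hsumC D]
    by_cases hiD : i ∈ D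
    · by_cases hjD : j ∈ D
      · simp only [hiD, hjD, if_true]
        have h := pre_le_sum y D
        rw [hD] at h
        linarith
      · -- i ∈ D, j ∉ D : compare with D' = insert j (D.erase i)
        have hjE : j ∉ D.erase i := fun h => hjD (Finset.mem_of_mem_erase h)
        set D' := insert j (D.erase i) with hD'def
        have hD'card : D'.card = m + 1 := by
          rw [hD'def, Finset.card_insert_of_notMem hjE, Finset.card_erase_of_mem hiD, hD]
          omega
        have hD'sum : ∑ a ∈ D', y a = y j + (∑ a ∈ D, y a - y i) := by
          rw [hD'def, Finset.sum_insert hjE, Finset.sum_erase_eq_sub hiD]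
        have h := pre_le_sum y D'
        rw [hD'card] at h
        simp only [hiD, hjD, if_true, if_false]
        linarith
    · have h := pre_le_sum y D
      rw [hD] at h
      by_cases hjD : j ∈ D <;> simp only [hiD, hjD, if_true, if_false] <;> linarith
  -- strict improvement at m = A.card
  have hstrictA : pre y A.card < pre yε A.card := by
    obtain ⟨D, hD, hDsum⟩ := pre_attain yε hAn
    rw [← hDsum, hsumC D]
    have hAle : pre y A.card ≤ ∑ a ∈ A, y a := pre_le_sum y A
    by_cases hiD : i ∈ D
    · by_cases hjD : j ∈ D
      · simp only [hiD, hjD, if_true]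
        have hne : D ≠ A := fun h => hiA (h ▸ hiD)
        have := (lemma2 D hD).2 hne
        linarith
      · have hjE : j ∉ D.erase i := fun h => hjD (Finset.mem_of_mem_erase h)
        set D' := insert j (D.erase i) with hD'def
        have hD'card : D'.card = A.card := by
          rw [hD'def, Finset.card_insert_of_notMem hjE, Finset.card_erase_of_mem hiD, hD]
          omega
        have hD'sum : ∑ a ∈ D', y a = y j + (∑ a ∈ D, y a - y i) := by
          rw [hD'def, Finset.sum_insert hjE, Finset.sum_erase_eq_sub hiD]
        have := (lemma2 D' hD'card).1
        simp only [hiD, hjD, if_true, if_false]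
        linarith
    · by_cases hjD : j ∈ D
      · simp only [hiD, hjD, if_true, if_false]
        have := (lemma2 D hD).1
        linarith
      · simp only [hiD, hjD, if_false]
        have hne : D ≠ A := fun h => hjD (h ▸ hjA)
        have := (lemma2 D hD).2 hne
        linarith
  -- assemble
  rw [gt_iff_lt, hOWA y, hOWA yε]
  apply Finset.sum_lt_sum
  · intro m hm
    have hm' : m < n := Finset.mem_range.1 hm
    exact mul_le_mul_of_nonneg_left (hmono m hm') (le_of_lt (hd m hm'))
  · refine ⟨A.card - 1, Finset.mem_range.2 (by omega), ?_⟩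
    have heq : A.card - 1 + 1 = A.card := by omega
    rw [heq]
    exact mul_lt_mul_of_pos_left hstrictA (hd _ (by omega))
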